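/- Let W_Γ be a right-angled Coxeter group and let w = a₁a₂⋯a_k be a word in the generators such that for each i (indices mod k), a_i ≠ a_{i+1} and a_i does not commute with a_{i+1} (i.e., a_i and a_{i+1} are not adjacent in Γ). Then for every n ≥ 1 the word wⁿ is reduced; in particular, the element represented by wⁿ has word length exactly nk. -/

import Mathlib

/-- The set of relators of the right-angled Coxeter group of a graph `Γ`:
squares of the generators, and commutators of generators joined by an edge. -/
def racgRels {V : Type*} (Γ : SimpleGraph V) : Set (FreeGroup V) :=
  {r | (∃ s : V, r = FreeGroup.of s * FreeGroup.of s) ∨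
       (∃ s t : V, Γ.Adj s t ∧
         r = FreeGroup.of s * FreeGroup.of t * (FreeGroup.of s)⁻¹ * (FreeGroup.of t)⁻¹)}

/-- The right-angled Coxeter group of a graph `Γ`. -/
abbrev RACG {V : Type*} (Γ : SimpleGraph V) : Type _ := PresentedGroup (racgRels Γ)

/-- The generator of `RACG Γ` corresponding to a vertex `s`. -/
def racgGen {V : Type*} (Γ : SimpleGraph V) (s : V) : RACG Γ :=
  PresentedGroup.of (rels := racgRels Γ) s


namespace RacgProof

set_option linter.unusedSectionVars false

variable {V : Type*} [DecidableEq V] (Γ : SimpleGraph V)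

/-- Delete the first occurrence of `s`. -/
def del (s : V) : List V → List V
  | [] => []
  | a :: l => if a = s then l else a :: del s l

@[simp] lemma del_nil (s : V) : del s ([] : List V) = [] := rfl
@[simp] lemma del_cons_self (s : V) (l : List V) : del s (s :: l) = l := by simp [del]
lemma del_cons_ne {a s : V} (h : a ≠ s) (l : List V) : del s (a :: l) = a :: del s l := by
  simp [del, h]

lemma length_del_le (s : V) (l : List V) : (del s l).length ≤ l.length := by
  induction l with
  | nil => simp
  | cons a l ih =>
    by_cases h : a = s
    · rw [h, del_cons_self]; exact Nat.le_succ _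
    · rw [del_cons_ne h]; simpa using Nat.succ_le_succ ih

lemma del_comm (s t : V) (l : List V) : del s (del t l) = del t (del s l) := by
  by_cases hst : s = t
  · rw [hst]
  induction l with
  | nil => simp
  | cons a l ih =>
    by_cases has : a = s
    · rw [has, del_cons_ne hst, del_cons_self, del_cons_self]
    · by_cases hat : a = t
      · have hts : t ≠ s := fun h => has (hat.trans h)
        rw [hat, del_cons_self, del_cons_ne hts, del_cons_self]
      · simp only [del_cons_ne has, del_cons_ne hat, ih]

/-- `s` occurs and can be brought to the front by swapping past adjacent (commuting) letters. -/
def Front (s : V) : List V → Prop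
  | [] => False
  | a :: l => a = s ∨ (Γ.Adj s a ∧ Front s l)

@[simp] lemma front_nil (s : V) : ¬ Front Γ s [] := fun h => h
@[simp] lemma front_cons {s a : V} {l : List V} :
    Front Γ s (a :: l) ↔ a = s ∨ (Γ.Adj s a ∧ Front Γ s l) := Iff.rfl

/-- The word admits a length reduction (two equal letters, everything between commuting). -/
def Red : List V → Prop
  | [] => False
  | a :: l => Front Γ a l ∨ Red l

@[simp] lemma red_nil : ¬ Red Γ ([] : List V) := fun h => h
@[simp] lemma red_cons {a : V} {l : List V} : Red Γ (a :: l) ↔ Front Γ a l ∨ Red Γ l := Iff.rfl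

/-- One swap of adjacent commuting letters. -/
inductive Sw : List V → List V → Prop
  | base {s t : V} (h : Γ.Adj s t) (l : List V) : Sw (s :: t :: l) (t :: s :: l)
  | cons (a : V) {l l' : List V} : Sw l l' → Sw (a :: l) (a :: l')

abbrev SwStar : List V → List V → Prop := Relation.ReflTransGen (Sw Γ)

lemma sw_symm {l l' : List V} (h : Sw Γ l l') : Sw Γ l' l := by
  induction h with
  | base h l => exact Sw.base h.symm l
  | cons a _ ih => exact Sw.cons a ih

lemma sw_length {l l' : List V} (h : Sw Γ l l') : l.length = l'.length := by
  induction h with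
  | base h l => rfl
  | cons a _ ih => simpa using ih

lemma front_sw_mp {u : V} {l l' : List V} (h : Sw Γ l l') (hf : Front Γ u l) :
    Front Γ u l' := by
  induction h with
  | @base s t h l =>
    rcases hf with hsu | ⟨hus, htu | ⟨hut, hF⟩⟩
    · exact Or.inr ⟨hsu ▸ h, Or.inl hsu⟩
    · exact Or.inl htu
    · exact Or.inr ⟨hut, Or.inr ⟨hus, hF⟩⟩
  | cons a hsw ih =>
    rcases hf with h1 | ⟨h2, h3⟩
    · exact Or.inl h1
    · exact Or.inr ⟨h2, ih h3⟩

lemma front_sw {u : V} {l l' : List V} (h : Sw Γ l l') : Front Γ u l ↔ Front Γ u l' :=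
  ⟨front_sw_mp Γ h, front_sw_mp Γ (sw_symm Γ h)⟩

lemma red_sw_mp {l l' : List V} (h : Sw Γ l l') (hr : Red Γ l) : Red Γ l' := by
  induction h with
  | @base s t h l =>
    rcases hr with (hts | ⟨hst, hF⟩) | (hF | hr)
    · exact Or.inl (Or.inl hts.symm)
    · exact Or.inr (Or.inl hF)
    · exact Or.inl (Or.inr ⟨h.symm, hF⟩)
    · exact Or.inr (Or.inr hr)
  | cons a hsw ih =>
    rcases hr with hF | hr
    · exact Or.inl (front_sw_mp Γ hsw hF)
    · exact Or.inr (ih hr)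

lemma red_sw {l l' : List V} (h : Sw Γ l l') : Red Γ l ↔ Red Γ l' :=
  ⟨red_sw_mp Γ h, red_sw_mp Γ (sw_symm Γ h)⟩

lemma swstar_cons (a : V) {l l' : List V} (h : SwStar Γ l l') :
    SwStar Γ (a :: l) (a :: l') :=
  Relation.ReflTransGen.lift (a :: ·) (fun _ _ hs => Sw.cons a hs) _ _ h

/-- Moving the front `s` back to its place. -/
lemma swstar_front_del {s : V} {l : List V} (hf : Front Γ s l) :
    SwStar Γ (s :: del s l) l := by
  induction l with
  | nil => exact absurd hf (front_nil Γ s)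
  | cons a l ih =>
    rcases hf with ha | ⟨hadj, hf⟩
    · rw [ha, del_cons_self]
    · rcases eq_or_ne a s with heq | hne
      · rw [heq, del_cons_self]
      · rw [del_cons_ne hne]
        exact Relation.ReflTransGen.head (Sw.base hadj _) (swstar_cons Γ a (ih hf))

lemma sw_del {s : V} {l l' : List V} (h : Sw Γ l l') :
    SwStar Γ (del s l) (del s l') := by
  induction h with
  | @base u v h l =>
    by_cases hus : u = s
    · have hvs : v ≠ s := fun hv => h.ne (hus.trans hv.symm)
      rw [hus, del_cons_self, del_cons_ne hvs, del_cons_self]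
    · by_cases hvs : v = s
      · rw [hvs, del_cons_ne hus, del_cons_self, del_cons_self]
      · simp only [del_cons_ne hus, del_cons_ne hvs]
        exact Relation.ReflTransGen.single (Sw.base h _)
  | cons a hsw ih =>
    by_cases has : a = s
    · rw [has, del_cons_self, del_cons_self]
      exact Relation.ReflTransGen.single hsw
    · simp only [del_cons_ne has]
      exact swstar_cons Γ a ih

/-- Deleting a frontable `s` does not change frontability of `t` when `s, t` commute. -/
lemma front_del {s t : V} {l : List V} (hadj : Γ.Adj s t) (hs : Front Γ s l) :
    Front Γ t (del s l) ↔ Front Γ t l := by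
  induction l with
  | nil => exact absurd hs (front_nil Γ s)
  | cons a l ih =>
    rcases eq_or_ne a s with heq | hne
    · rw [heq, del_cons_self]
      constructor
      · intro h; exact Or.inr ⟨hadj.symm, h⟩
      · rintro (h | ⟨-, h⟩)
        · exact absurd h hadj.ne
        · exact h
    · rcases hs with ha | ⟨hadj', hs⟩
      · exact absurd ha hne
      · rw [del_cons_ne hne]
        rw [front_cons, front_cons, ih hs]

lemma red_del {s : V} {l : List V} (hs : Front Γ s l) (hr : Red Γ (del s l)) :
    Red Γ l := by
  induction l with
  | nil => exact absurd hs (front_nil Γ s)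
  | cons a l ih =>
    rcases eq_or_ne a s with heq | hne
    · rw [heq, del_cons_self] at hr
      exact Or.inr hr
    · rcases hs with ha | ⟨hadj, hs⟩
      · exact absurd ha hne
      · rw [del_cons_ne hne] at hr
        rcases hr with hF | hr
        · exact Or.inl ((front_del Γ hadj hs).mp hF)
        · exact Or.inr (ih hs hr)

lemma front_del_self {s : V} {l : List V} (hirr : ¬ Red Γ l) (hs : Front Γ s l) :
    ¬ Front Γ s (del s l) := by
  induction l with
  | nil => exact absurd hs (front_nil Γ s)
  | cons a l ih =>
    rcases eq_or_ne a s with heq | hne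
    · rw [heq] at hirr ⊢
      rw [del_cons_self]
      intro h
      exact hirr (Or.inl h)
    · rcases hs with ha | ⟨hadj, hs⟩
      · exact absurd ha hne
      · rw [del_cons_ne hne]
        rintro (h | ⟨-, h⟩)
        · exact hne h
        · exact ih (fun hr => hirr (Or.inr hr)) hs h

/-! ### The action on reduced words modulo commutation -/

def Irr (l : List V) : Prop := ¬ Red Γ l

def RW := {l : List V // Irr Γ l}

def swr : RW Γ → RW Γ → Prop := fun x y => Sw Γ x.1 y.1

def Q := Quot (swr Γ)

def mkQ (x : RW Γ) : Q Γ := Quot.mk (swr Γ) x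

lemma mkQ_eq_of_val {x y : RW Γ} (h : x.1 = y.1) : mkQ Γ x = mkQ Γ y := by
  obtain ⟨a, ha⟩ := x; obtain ⟨b, hb⟩ := y
  cases h; rfl

lemma mkQ_eq_of_swstar_aux {l l' : List V} (hs : SwStar Γ l l') :
    ∀ (h : Irr Γ l) (h' : Irr Γ l'), mkQ Γ ⟨l, h⟩ = mkQ Γ ⟨l', h'⟩ := by
  induction hs with
  | refl => intro h h'; rfl
  | tail hab hbc ih =>
    intro h h'
    have hb : Irr Γ _ := fun hr => h' (red_sw_mp Γ hbc hr)
    exact (ih h hb).trans (Quot.sound hbc)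

lemma mkQ_eq_of_swstar {x y : RW Γ} (h : SwStar Γ x.1 y.1) : mkQ Γ x = mkQ Γ y := by
  obtain ⟨a, ha⟩ := x; obtain ⟨b, hb⟩ := y
  exact mkQ_eq_of_swstar_aux Γ h ha hb

open Classical in
/-- The action of the generator `s` on irreducible words. -/
noncomputable def sig (s : V) (x : RW Γ) : RW Γ :=
  if h : Front Γ s x.1 then ⟨del s x.1, fun hr => x.2 (red_del Γ h hr)⟩
  else ⟨s :: x.1, fun hr => hr.elim h x.2⟩

lemma sig_val_pos {s : V} {x : RW Γ} (h : Front Γ s x.1) :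
    (sig Γ s x).1 = del s x.1 := by
  unfold sig; exact congrArg Subtype.val (dif_pos h)

lemma sig_val_neg {s : V} {x : RW Γ} (h : ¬ Front Γ s x.1) :
    (sig Γ s x).1 = s :: x.1 := by
  unfold sig; exact congrArg Subtype.val (dif_neg h)

lemma sig_len (s : V) (x : RW Γ) : (sig Γ s x).1.length ≤ x.1.length + 1 := by
  by_cases h : Front Γ s x.1
  · rw [sig_val_pos Γ h]
    exact le_trans (length_del_le s x.1) (Nat.le_succ _)
  · rw [sig_val_neg Γ h]
    exact le_refl _

lemma sig_resp (s : V) {x y : RW Γ} (h : swr Γ x y) :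
    mkQ Γ (sig Γ s x) = mkQ Γ (sig Γ s y) := by
  have hf := front_sw Γ h (u := s)
  by_cases hx : Front Γ s x.1
  · refine mkQ_eq_of_swstar Γ ?_
    rw [sig_val_pos Γ hx, sig_val_pos Γ (hf.mp hx)]
    exact sw_del Γ h
  · refine mkQ_eq_of_swstar Γ ?_
    rw [sig_val_neg Γ hx, sig_val_neg Γ (fun hy => hx (hf.mpr hy))]
    exact Relation.ReflTransGen.single (Sw.cons s h)

noncomputable def sigQ (s : V) : Q Γ → Q Γ :=
  Quot.lift (fun x => mkQ Γ (sig Γ s x)) (fun _ _ h => sig_resp Γ s h)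

lemma sig_sig (s : V) (x : RW Γ) : mkQ Γ (sig Γ s (sig Γ s x)) = mkQ Γ x := by
  by_cases hf : Front Γ s x.1
  · have h1 : (sig Γ s x).1 = del s x.1 := sig_val_pos Γ hf
    have hnf : ¬ Front Γ s (sig Γ s x).1 := by
      rw [h1]; exact front_del_self Γ x.2 hf
    refine mkQ_eq_of_swstar Γ ?_
    rw [sig_val_neg Γ hnf, h1]
    exact swstar_front_del Γ hf
  · have h1 : (sig Γ s x).1 = s :: x.1 := sig_val_neg Γ hf
    have hf2 : Front Γ s (sig Γ s x).1 := by rw [h1]; exact Or.inl rfl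
    refine mkQ_eq_of_val Γ ?_
    rw [sig_val_pos Γ hf2, h1, del_cons_self]

lemma sig_comm {s t : V} (hadj : Γ.Adj s t) (x : RW Γ) :
    mkQ Γ (sig Γ s (sig Γ t x)) = mkQ Γ (sig Γ t (sig Γ s x)) := by
  refine mkQ_eq_of_swstar Γ ?_
  by_cases hs : Front Γ s x.1 <;> by_cases ht : Front Γ t x.1
  · have hs1 : (sig Γ s x).1 = del s x.1 := sig_val_pos Γ hs
    have ht1 : (sig Γ t x).1 = del t x.1 := sig_val_pos Γ ht
    have hF1 : Front Γ s (sig Γ t x).1 := by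
      rw [ht1]; exact (front_del Γ hadj.symm ht).mpr hs
    have hF2 : Front Γ t (sig Γ s x).1 := by
      rw [hs1]; exact (front_del Γ hadj hs).mpr ht
    rw [sig_val_pos Γ hF1, ht1, sig_val_pos Γ hF2, hs1, del_comm]
  · have hs1 : (sig Γ s x).1 = del s x.1 := sig_val_pos Γ hs
    have ht1 : (sig Γ t x).1 = t :: x.1 := sig_val_neg Γ ht
    have hF : Front Γ s (sig Γ t x).1 := by
      rw [ht1]; exact Or.inr ⟨hadj, hs⟩
    have hNF : ¬ Front Γ t (sig Γ s x).1 := by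
      rw [hs1, front_del Γ hadj hs]; exact ht
    rw [sig_val_pos Γ hF, ht1, sig_val_neg Γ hNF, hs1, del_cons_ne hadj.ne']
  · have hs1 : (sig Γ s x).1 = s :: x.1 := sig_val_neg Γ hs
    have ht1 : (sig Γ t x).1 = del t x.1 := sig_val_pos Γ ht
    have hF : Front Γ t (sig Γ s x).1 := by
      rw [hs1]; exact Or.inr ⟨hadj.symm, ht⟩
    have hNF : ¬ Front Γ s (sig Γ t x).1 := by
      rw [ht1, front_del Γ hadj.symm ht]; exact hs
    rw [sig_val_neg Γ hNF, ht1, sig_val_pos Γ hF, hs1, del_cons_ne hadj.ne]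
  · have hs1 : (sig Γ s x).1 = s :: x.1 := sig_val_neg Γ hs
    have ht1 : (sig Γ t x).1 = t :: x.1 := sig_val_neg Γ ht
    have hNF1 : ¬ Front Γ s (sig Γ t x).1 := by
      rw [ht1]
      rintro (h1 | ⟨-, h2⟩)
      · exact hadj.ne' h1
      · exact hs h2
    have hNF2 : ¬ Front Γ t (sig Γ s x).1 := by
      rw [hs1]
      rintro (h1 | ⟨-, h2⟩)
      · exact hadj.ne h1
      · exact ht h2
    rw [sig_val_neg Γ hNF1, ht1, sig_val_neg Γ hNF2, hs1]
    exact Relation.ReflTransGen.single (Sw.base hadj _)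

noncomputable def sigE (s : V) : Equiv.Perm (Q Γ) where
  toFun := sigQ Γ s
  invFun := sigQ Γ s
  left_inv := fun q => Quot.inductionOn q (fun x => sig_sig Γ s x)
  right_inv := fun q => Quot.inductionOn q (fun x => sig_sig Γ s x)

lemma sigE_sq (s : V) : sigE Γ s * sigE Γ s = 1 := by
  apply Equiv.ext
  intro q
  rw [Equiv.Perm.mul_apply, Equiv.Perm.one_apply]
  exact (sigE Γ s).left_inv q

lemma sigE_mul_comm {s t : V} (hadj : Γ.Adj s t) :
    sigE Γ s * sigE Γ t = sigE Γ t * sigE Γ s := by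
  apply Equiv.ext
  intro q
  rw [Equiv.Perm.mul_apply, Equiv.Perm.mul_apply]
  exact Quot.inductionOn q (fun x => sig_comm Γ hadj x)

lemma sigE_rels : ∀ r ∈ racgRels Γ, FreeGroup.lift (fun s => sigE Γ s) r = 1 := by
  intro r hr
  rcases hr with ⟨s, rfl⟩ | ⟨s, t, hadj, rfl⟩
  · rw [map_mul, FreeGroup.lift_apply_of]
    exact sigE_sq Γ s
  · rw [map_mul, map_mul, map_mul, map_inv, map_inv, FreeGroup.lift_apply_of, FreeGroup.lift_apply_of]
    rw [← commutatorElement_def, commutatorElement_eq_one_iff_mul_comm]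
    exact sigE_mul_comm Γ hadj

noncomputable def rho : RACG Γ →* Equiv.Perm (Q Γ) :=
  PresentedGroup.toGroup (sigE_rels Γ)

lemma rho_gen (s : V) : rho Γ (racgGen Γ s) = sigE Γ s :=
  PresentedGroup.toGroup.of (sigE_rels Γ)

lemma irr_nil : Irr Γ ([] : List V) := red_nil Γ

noncomputable def nilQ : Q Γ := mkQ Γ ⟨[], irr_nil Γ⟩

lemma eval_le (m : List V) : ∃ x : RW Γ, x.1.length ≤ m.length ∧
    rho Γ ((m.map (racgGen Γ)).prod) (nilQ Γ) = mkQ Γ x := by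
  induction m with
  | nil =>
    refine ⟨⟨[], irr_nil Γ⟩, le_refl _, ?_⟩
    simp only [List.map_nil, List.prod_nil, map_one, Equiv.Perm.one_apply]
    rfl
  | cons s m ih =>
    obtain ⟨x, hlen, hx⟩ := ih
    refine ⟨sig Γ s x, ?_, ?_⟩
    · exact le_trans (sig_len Γ s x) (Nat.succ_le_succ hlen)
    · rw [List.map_cons, List.prod_cons, map_mul, Equiv.Perm.mul_apply, hx, rho_gen]
      rfl

/-- The relation between (cyclically) consecutive letters of the word. -/
def RelW : V → V → Prop := fun a b => a ≠ b ∧ ¬ Γ.Adj a b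

lemma not_front_of_rel {s : V} {m : List V} (h : ∀ b ∈ m.head?, RelW Γ s b) :
    ¬ Front Γ s m := by
  cases m with
  | nil => exact front_nil Γ s
  | cons a m =>
    have ha := h a rfl
    rintro (h1 | ⟨h2, -⟩)
    · exact ha.1 h1.symm
    · exact ha.2 h2

lemma chain_irr {m : List V} (h : List.Chain' (RelW Γ) m) : Irr Γ m := by
  induction m with
  | nil => exact red_nil Γ
  | cons a m ih =>
    rintro (hF | hr)
    · exact not_front_of_rel Γ (List.isChain_cons.mp h).1 hF
    · exact ih (List.isChain_cons.mp h).2 hr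

lemma eval_chain {m : List V} (h : List.Chain' (RelW Γ) m) :
    rho Γ ((m.map (racgGen Γ)).prod) (nilQ Γ) = mkQ Γ ⟨m, chain_irr Γ h⟩ := by
  induction m with
  | nil =>
    simp only [List.map_nil, List.prod_nil, map_one, Equiv.Perm.one_apply]
    rfl
  | cons s m ih =>
    have h' := List.isChain_cons.mp h
    rw [List.map_cons, List.prod_cons, map_mul, Equiv.Perm.mul_apply, ih h'.2, rho_gen]
    have hnf : ¬ Front Γ s m := not_front_of_rel Γ h'.1
    show mkQ Γ (sig Γ s ⟨m, _⟩) = _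
    exact mkQ_eq_of_val Γ (sig_val_neg Γ hnf)

lemma chain_flatten {L : List V} (hne : L ≠ []) (hL : List.Chain' (RelW Γ) L)
    (hlh : ∀ x ∈ L.getLast?, ∀ y ∈ L.head?, RelW Γ x y) (n : ℕ) :
    List.Chain' (RelW Γ) ((List.replicate n L).flatten) := by
  obtain ⟨a, L', rfl⟩ := List.exists_cons_of_ne_nil hne
  suffices h : ∀ n : ℕ, List.Chain' (RelW Γ) ((List.replicate n (a :: L')).flatten) ∧
      ((List.replicate n (a :: L')).flatten = [] ∨
        ((List.replicate n (a :: L')).flatten).head? = some a) from (h n).1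
  intro n
  induction n with
  | zero => exact ⟨List.isChain_nil, Or.inl rfl⟩
  | succ n ih =>
    rw [List.replicate_succ, List.flatten_cons]
    constructor
    · refine List.isChain_append.mpr ⟨hL, ih.1, ?_⟩
      intro x hx y hy
      rcases ih.2 with hnil | hh
      · rw [hnil] at hy; simp at hy
      · rw [hh] at hy
        have hya : y = a := by simpa using hy.symm
        rw [hya]
        exact hlh x hx a rfl
    · right
      rw [List.cons_append]
      rfl

lemma eqvgen_length {x y : RW Γ} (h : Relation.EqvGen (swr Γ) x y) :
    x.1.length = y.1.length := by
  induction h with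
  | rel _ _ h => exact sw_length Γ h
  | refl => rfl
  | symm _ _ _ ih => exact ih.symm
  | trans _ _ _ _ _ ih1 ih2 => exact ih1.trans ih2

end RacgProof


/-- If `w = a₁ ⋯ a_k` is a word in the generators of a right-angled Coxeter group
such that (cyclically) consecutive letters are distinct and non-adjacent in `Γ`,
then `wⁿ` is reduced for every `n ≥ 1`: no word of length less than `n * k`
represents the same element (so that element has word length exactly `n * k`). -/
theorem stmt8 {V : Type*} [Fintype V] [DecidableEq V] (Γ : SimpleGraph V)
    (k : ℕ) (hk : 0 < k) (w : Fin k → V)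
    (hne : ∀ i : Fin k, w i ≠ w ⟨(i + 1) % k, Nat.mod_lt _ hk⟩)
    (hnadj : ∀ i : Fin k, ¬ Γ.Adj (w i) (w ⟨(i + 1) % k, Nat.mod_lt _ hk⟩))
    (n : ℕ) (hn : 1 ≤ n) :
    ∀ m : List V,
      (m.map (racgGen Γ)).prod =
        (((List.replicate n (List.ofFn w)).flatten).map (racgGen Γ)).prod →
      n * k ≤ m.length := by
  intro m hm
  set L : List V := List.ofFn w with hLdef
  have hLlen : L.length = k := by rw [hLdef, List.length_ofFn]
  have hLne : L ≠ [] := by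
    intro h
    rw [h] at hLlen
    simp at hLlen
    omega
  have hchainL : List.Chain' (RacgProof.RelW Γ) L := by
    rw [hLdef]; refine List.isChain_iff_getElem.mpr ?_
    intro i hi
    rw [List.length_ofFn] at hi
    have h1 : i < k := by omega
    have h2 : i + 1 < k := by omega
    rw [List.getElem_ofFn, List.getElem_ofFn]
    have hmod : ((i : ℕ) + 1) % k = i + 1 := Nat.mod_eq_of_lt h2
    have hA := hne ⟨i, h1⟩
    have hB := hnadj ⟨i, h1⟩
    simp only [hmod] at hA hB
    exact ⟨hA, hB⟩
  have hk1 : k - 1 < k := by omega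
  have hlast : L.getLast? = some (w ⟨k - 1, hk1⟩) := by
    rw [hLdef, List.getLast?_eq_getElem?, List.getElem?_ofFn]
    simp [List.ofFnNthVal, hk1, List.length_ofFn]
  have hhead : L.head? = some (w ⟨0, hk⟩) := by
    rw [hLdef, List.head?_eq_getElem?, List.getElem?_ofFn]
    simp [List.ofFnNthVal, hk]
  have hlh : ∀ x ∈ L.getLast?, ∀ y ∈ L.head?, RacgProof.RelW Γ x y := by
    rw [hlast, hhead]
    intro x hx y hy
    have hx' : x = w ⟨k - 1, hk1⟩ := by simpa using hx.symm
    have hy' : y = w ⟨0, hk⟩ := by simpa using hy.symm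
    rw [hx', hy']
    have hmod : ((k - 1 : ℕ) + 1) % k = 0 := by
      rw [Nat.sub_add_cancel hk, Nat.mod_self]
    have hA := hne ⟨k - 1, hk1⟩
    have hB := hnadj ⟨k - 1, hk1⟩
    simp only [hmod] at hA hB
    exact ⟨hA, hB⟩
  have hchainW := RacgProof.chain_flatten Γ hLne hchainL hlh n
  have hIrrW := RacgProof.chain_irr Γ hchainW
  have hevalW := RacgProof.eval_chain Γ hchainW
  obtain ⟨x, hxlen, hxeval⟩ := RacgProof.eval_le Γ m
  rw [hm, hevalW] at hxeval
  have heq : Relation.EqvGen (RacgProof.swr Γ) x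
      ⟨(List.replicate n L).flatten, RacgProof.chain_irr Γ hchainW⟩ := Quot.eq.mp hxeval.symm
  have hlen := RacgProof.eqvgen_length Γ heq
  have hWlen : ((List.replicate n L).flatten).length = n * k := by
    rw [List.length_flatten, List.map_replicate, hLlen, List.sum_replicate, smul_eq_mul]
  rw [hWlen] at hlen
  omega
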